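/- Let N ≥ 2, s ∈ (0,1) with N > 2s, and let (u_n) ⊂ H^s(ℝᴺ) be a sequence with sup_n [u_n]_{H^s(ℝᴺ)} < ∞ and satisfying ∫_{ℝᴺ} ( |u_n|^{p+1}/(p+1) − u_n²/2 ) dx = 1 for some fixed p ∈ (1, (N+2s)/(N−2s)). Then sup_n ‖u_n‖_{L²(ℝᴺ)} < ∞; consequently sup_n ‖u_n‖_{H^s(ℝᴺ)} < ∞ and sup_n ‖u_n‖_{L^q(ℝᴺ)} < ∞ for every q ∈ [2, 2N/(N−2s)]. -/

import Mathlib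

open MeasureTheory Metric
open scoped ENNReal

noncomputable def gagliardo (N : ℕ) (s : ℝ) (u : EuclideanSpace ℝ (Fin N) → ℝ) : ℝ≥0∞ :=
  ∫⁻ x, ∫⁻ y, ENNReal.ofReal (|u x - u y| ^ 2 / ‖x - y‖ ^ ((N : ℝ) + 2 * s))

namespace Apriori


abbrev sp (N : ℕ) := EuclideanSpace ℝ (Fin N)

/-- truncation at level c -/
def tr (c t : ℝ) : ℝ := min (max (t - c) 0) c

lemma tr_nonneg {c : ℝ} (hc : 0 ≤ c) (t : ℝ) : 0 ≤ tr c t :=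
  le_min (le_max_right _ _) hc

lemma tr_lip (c a b : ℝ) : |tr c b - tr c a| ≤ |b - a| := by
  simp only [tr, min_def, max_def]
  split_ifs <;>
    (rw [abs_sub_le_iff]; constructor <;>
      linarith [le_abs_self (b - a), neg_abs_le (b - a)])

lemma tr_of_le {c t : ℝ} (hc : 0 ≤ c) (h : t ≤ c) : tr c t = 0 := by
  simp only [tr, max_def, min_def]; split_ifs <;> linarith

lemma tr_of_ge {c t : ℝ} (hc : 0 ≤ c) (h : 2 * c ≤ t) : tr c t = c := by
  simp only [tr, max_def, min_def]; split_ifs <;> linarith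

lemma tr_le {c : ℝ} (t : ℝ) : tr c t ≤ c := min_le_right _ _

lemma tr_telescope {c t : ℝ} (hc : 0 ≤ c) (ht : 0 ≤ t) :
    tr c t = min t (2 * c) - min t c := by
  simp only [tr, max_def, min_def]; split_ifs <;> linarith

lemma tr_continuous (c : ℝ) : Continuous (tr c) :=
  (continuous_id.sub continuous_const).max continuous_const |>.min continuous_const

lemma gag_le_of_lip {N : ℕ} {s : ℝ} (f : ℝ → ℝ) (hf : ∀ a b : ℝ, |f a - f b| ≤ |a - b|)
    (v : sp N → ℝ) :
    gagliardo N s (fun x => f (v x)) ≤ gagliardo N s v := by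
  refine lintegral_mono fun x => lintegral_mono fun y => ?_
  refine ENNReal.ofReal_le_ofReal ?_
  refine div_le_div_of_nonneg_right ?_ (Real.rpow_nonneg (norm_nonneg _) _)
  exact pow_le_pow_left₀ (abs_nonneg _) (hf (v x) (v y)) 2

lemma gag_congr {N : ℕ} {s : ℝ} {v w : sp N → ℝ} (h : v =ᵐ[volume] w) :
    gagliardo N s v = gagliardo N s w := by
  refine lintegral_congr_ae ?_
  filter_upwards [h] with x hx
  refine lintegral_congr_ae ?_
  filter_upwards [h] with y hy
  rw [hx, hy]

lemma mul_meas_le_lintegral {N : ℕ} {S : Set (sp N)} (hS : MeasurableSet S)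
    (g : sp N → ℝ≥0∞) (c : ℝ≥0∞) (h : ∀ x ∈ S, c ≤ g x) :
    c * volume S ≤ ∫⁻ x, g x := by
  rw [← lintegral_indicator_const hS]
  refine lintegral_mono fun x => ?_
  by_cases hx : x ∈ S
  · rw [Set.indicator_of_mem hx]; exact h x hx
  · rw [Set.indicator_of_notMem hx]; exact zero_le

lemma ofReal_sq {t : ℝ} (ht : 0 ≤ t) :
    ENNReal.ofReal t ^ (2 : ℝ) = ENNReal.ofReal (t ^ 2) := by
  rw [ENNReal.ofReal_rpow_of_nonneg ht (by norm_num),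
    show (2 : ℝ) = ((2 : ℕ) : ℝ) by norm_num, Real.rpow_natCast]



/-- Cauchy–Schwarz for lintegral on a set: `(∫⁻ f)² ≤ μ s * ∫⁻ f²`, phrased as
`∫⁻ f ≤ (∫⁻ f²)^(1/2) * (μ s)^(1/2)`. -/
lemma lintegral_le_sqrt {N : ℕ} (S : Set (sp N)) (f : sp N → ℝ≥0∞) (hf : Measurable f) :
    ∫⁻ y in S, f y ≤ (∫⁻ y in S, f y ^ (2:ℝ)) ^ (1/2 : ℝ) * (volume S) ^ (1/2 : ℝ) := by
  have hconj : Real.HolderConjugate 2 2 := by constructor <;> norm_num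
  have := ENNReal.lintegral_mul_le_Lp_mul_Lq (volume.restrict S) hconj
    hf.aemeasurable (aemeasurable_const (b := (1:ℝ≥0∞)))
  simpa using this

lemma sq_half (x : ℝ≥0∞) : (x ^ (1/2:ℝ)) ^ 2 = x := by
  rw [← ENNReal.rpow_natCast (x ^ (1/2:ℝ)) 2, ← ENNReal.rpow_mul]; norm_num

lemma core {N : ℕ} {s : ℝ} (hs : 0 < s) (v : sp N → ℝ) (hv : Measurable v) (h0 : ∀ x, 0 ≤ v x)
    (r lam : ℝ) (hr : 0 < r) (hlam : 0 < lam)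
    (hcal : ∫⁻ x, ENNReal.ofReal (v x ^ 2) ≤
      ENNReal.ofReal lam ^ 2 * volume (ball (0 : sp N) r)) :
    volume {x | 2 * lam ≤ v x} ≤
      (ENNReal.ofReal lam)⁻¹ ^ 2 * (volume (ball (0 : sp N) r))⁻¹ *
        ENNReal.ofReal (r ^ ((N : ℝ) + 2 * s)) * gagliardo N s v := by
  set B := volume (ball (0 : sp N) r) with hBdef
  have hB0 : B ≠ 0 := (measure_ball_pos volume _ hr).ne'
  have hBT : B ≠ ⊤ := measure_ball_lt_top.ne
  have hball : ∀ x : sp N, volume (ball x r) = B := fun x =>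
    Measure.addHaar_ball_center volume x r
  set a : sp N → ℝ≥0∞ := fun x => ENNReal.ofReal (v x) with hadef
  have ha : Measurable a := hv.ennreal_ofReal
  set Avg : sp N → ℝ≥0∞ := fun x => B⁻¹ * ∫⁻ y in ball x r, a y with hAdef
  have hL : ENNReal.ofReal lam ≠ 0 := by
    simp [ENNReal.ofReal_eq_zero, not_le, hlam]
  have hLT : ENNReal.ofReal lam ≠ ⊤ := ENNReal.ofReal_ne_top
  -- Step A : Avg ≤ lam
  have stepA : ∀ x, Avg x ≤ ENNReal.ofReal lam := by
    intro x
    have h1 : ∫⁻ y in ball x r, a y ≤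
        (∫⁻ y in ball x r, a y ^ (2:ℝ)) ^ (1/2 : ℝ) * B ^ (1/2 : ℝ) := by
      simpa [hball x] using lintegral_le_sqrt (ball x r) a ha
    have h2 : ∫⁻ y in ball x r, a y ^ (2:ℝ) ≤ ENNReal.ofReal lam ^ 2 * B := by
      refine le_trans (setLIntegral_le_lintegral _ _) ?_
      calc ∫⁻ y, a y ^ (2:ℝ) = ∫⁻ y, ENNReal.ofReal (v y ^ 2) := by
            refine lintegral_congr fun y => ofReal_sq (h0 y)
        _ ≤ ENNReal.ofReal lam ^ 2 * B := hcal
    have h3 : (∫⁻ y in ball x r, a y ^ (2:ℝ)) ^ (1/2 : ℝ) ≤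
        (ENNReal.ofReal lam ^ 2 * B) ^ (1/2 : ℝ) := ENNReal.rpow_le_rpow h2 (by norm_num)
    have h4 : (ENNReal.ofReal lam ^ 2 * B) ^ (1/2 : ℝ) * B ^ (1/2 : ℝ) =
        ENNReal.ofReal lam * B := by
      rw [ENNReal.mul_rpow_of_nonneg _ _ (by norm_num : (0:ℝ) ≤ 1/2)]
      rw [mul_assoc, ← ENNReal.rpow_add _ _ hB0 hBT]
      norm_num
      rw [← ENNReal.rpow_natCast (ENNReal.ofReal lam) 2, ← ENNReal.rpow_mul]
      norm_num
    have : ∫⁻ y in ball x r, a y ≤ ENNReal.ofReal lam * B := by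
      calc ∫⁻ y in ball x r, a y ≤
          (∫⁻ y in ball x r, a y ^ (2:ℝ)) ^ (1/2 : ℝ) * B ^ (1/2 : ℝ) := h1
        _ ≤ (ENNReal.ofReal lam ^ 2 * B) ^ (1/2 : ℝ) * B ^ (1/2 : ℝ) := by
            exact mul_le_mul_left h3 _
        _ = ENNReal.ofReal lam * B := h4
    calc Avg x ≤ B⁻¹ * (ENNReal.ofReal lam * B) := mul_le_mul_right this _
      _ = ENNReal.ofReal lam := by
          rw [mul_comm (ENNReal.ofReal lam) B, ← mul_assoc, ENNReal.inv_mul_cancel hB0 hBT,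
            one_mul]
  -- inner gagliardo integrand
  set Q : sp N → sp N → ℝ≥0∞ := fun x y =>
    ENNReal.ofReal (|v x - v y| ^ 2 / ‖x - y‖ ^ ((N : ℝ) + 2 * s)) with hQdef
  have hQm : ∀ x, Measurable (Q x) := by
    intro x
    apply Measurable.ennreal_ofReal
    apply Measurable.div
    · exact ((hv.const_sub (v x)).abs.pow_const 2)
    · exact ((measurable_const.sub measurable_id).norm.pow_const _)
  -- Step B : pointwise bound
  have stepB : ∀ x, (a x - Avg x) ^ 2 ≤
      B⁻¹ * ENNReal.ofReal (r ^ ((N : ℝ) + 2 * s)) * ∫⁻ y, Q x y := by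
    intro x
    have hsub : a x - Avg x ≤ B⁻¹ * ∫⁻ y in ball x r, (a x - a y) := by
      have hX : a x = B⁻¹ * ∫⁻ _ in ball x r, a x := by
        rw [setLIntegral_const, hball x, mul_comm (a x) B, ← mul_assoc,
          ENNReal.inv_mul_cancel hB0 hBT, one_mul]
      have hdiff : (∫⁻ _ in ball x r, a x) - (∫⁻ y in ball x r, a y) ≤
          ∫⁻ y in ball x r, (a x - a y) := by
        rw [tsub_le_iff_right]
        have hpt : ∀ y : sp N, a x ≤ (a x - a y) + a y := fun y => le_tsub_add
        calc (∫⁻ _ in ball x r, a x) ≤ ∫⁻ y in ball x r, ((a x - a y) + a y) :=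
              lintegral_mono hpt
          _ = (∫⁻ y in ball x r, (a x - a y)) + ∫⁻ y in ball x r, a y :=
              lintegral_add_right' _ ha.aemeasurable
      calc a x - Avg x = B⁻¹ * (∫⁻ _ in ball x r, a x) - B⁻¹ * ∫⁻ y in ball x r, a y := by
            rw [← hX]
        _ = B⁻¹ * ((∫⁻ _ in ball x r, a x) - ∫⁻ y in ball x r, a y) := by
            rw [mul_comm B⁻¹ ((∫⁻ _ in ball x r, a x) - ∫⁻ y in ball x r, a y),
              ENNReal.sub_mul (fun _ _ => ENNReal.inv_ne_top.mpr hB0),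
              mul_comm _ B⁻¹, mul_comm _ B⁻¹]
        _ ≤ B⁻¹ * ∫⁻ y in ball x r, (a x - a y) := mul_le_mul_right hdiff _
    have hCS : ∫⁻ y in ball x r, (a x - a y) ≤
        (∫⁻ y in ball x r, (a x - a y) ^ (2:ℝ)) ^ (1/2 : ℝ) * B ^ (1/2 : ℝ) := by
      simpa [hball x] using
        lintegral_le_sqrt (ball x r) (fun y => a x - a y) (measurable_const.sub ha)
    -- bound the quadratic integrand
    have hptq : ∀ y ∈ ball x r, (a x - a y) ^ (2:ℝ) ≤
        ENNReal.ofReal (r ^ ((N : ℝ) + 2 * s)) * Q x y := by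
      intro y hy
      have h1 : (a x - a y) ^ (2:ℝ) ≤ ENNReal.ofReal (|v x - v y| ^ 2) := by
        rcases le_total (v x) (v y) with h | h
        · have : a x - a y = 0 := tsub_eq_zero_of_le (ENNReal.ofReal_le_ofReal h)
          rw [this, ENNReal.zero_rpow_of_pos (by norm_num)]
          exact zero_le
        · have : a x - a y = ENNReal.ofReal (v x - v y) := by
            rw [hadef]; exact (ENNReal.ofReal_sub _ (h0 y)).symm
          rw [this, ofReal_sq (by linarith), ← sq_abs]
      refine h1.trans ?_
      by_cases hxy : x = y
      · subst hxy; simp [sub_self]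
      · have hd0 : (0:ℝ) < ‖x - y‖ := by
          rw [norm_pos_iff]; exact sub_ne_zero.mpr hxy
        have hdr : ‖x - y‖ ≤ r := by
          have h := mem_ball.mp hy
          rw [dist_eq_norm] at h
          calc ‖x - y‖ = ‖y - x‖ := by rw [← neg_sub y x, norm_neg]
            _ ≤ r := h.le
        have hD0 : (0:ℝ) < ‖x - y‖ ^ ((N : ℝ) + 2 * s) := Real.rpow_pos_of_pos hd0 _
        have hDr : ‖x - y‖ ^ ((N : ℝ) + 2 * s) ≤ r ^ ((N : ℝ) + 2 * s) :=
          Real.rpow_le_rpow hd0.le hdr (by positivity)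
        calc ENNReal.ofReal (|v x - v y| ^ 2)
            = ENNReal.ofReal ((|v x - v y| ^ 2 / ‖x - y‖ ^ ((N:ℝ) + 2*s)) *
                ‖x - y‖ ^ ((N:ℝ) + 2*s)) := by
              rw [div_mul_cancel₀ _ hD0.ne']
          _ ≤ ENNReal.ofReal ((|v x - v y| ^ 2 / ‖x - y‖ ^ ((N:ℝ) + 2*s)) *
                r ^ ((N:ℝ) + 2*s)) := by
              refine ENNReal.ofReal_le_ofReal (mul_le_mul_of_nonneg_left hDr (by positivity))
          _ = ENNReal.ofReal (r ^ ((N:ℝ) + 2*s)) * Q x y := by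
              rw [mul_comm, ENNReal.ofReal_mul (Real.rpow_nonneg (by positivity) _)]
    have hq2 : ∫⁻ y in ball x r, (a x - a y) ^ (2:ℝ) ≤
        ENNReal.ofReal (r ^ ((N:ℝ) + 2*s)) * ∫⁻ y, Q x y := by
      calc ∫⁻ y in ball x r, (a x - a y) ^ (2:ℝ)
          ≤ ∫⁻ y in ball x r, ENNReal.ofReal (r ^ ((N:ℝ) + 2*s)) * Q x y :=
            setLIntegral_mono ((hQm x).const_mul _) hptq
        _ ≤ ∫⁻ y, ENNReal.ofReal (r ^ ((N:ℝ) + 2*s)) * Q x y := setLIntegral_le_lintegral _ _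
        _ = ENNReal.ofReal (r ^ ((N:ℝ) + 2*s)) * ∫⁻ y, Q x y :=
            lintegral_const_mul' _ _ ENNReal.ofReal_ne_top
    calc (a x - Avg x) ^ 2
        ≤ (B⁻¹ * ((∫⁻ y in ball x r, (a x - a y) ^ (2:ℝ)) ^ (1/2:ℝ) * B ^ (1/2:ℝ))) ^ 2 :=
          pow_le_pow_left₀ (zero_le) (hsub.trans (mul_le_mul_right hCS _)) 2
      _ = B⁻¹ ^ 2 * ((∫⁻ y in ball x r, (a x - a y) ^ (2:ℝ)) * B) := by
          rw [mul_pow, mul_pow, sq_half, sq_half]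
      _ ≤ B⁻¹ ^ 2 * ((ENNReal.ofReal (r ^ ((N:ℝ) + 2*s)) * ∫⁻ y, Q x y) * B) := by
          exact mul_le_mul_right (mul_le_mul_left hq2 _) _
      _ = B⁻¹ * ENNReal.ofReal (r ^ ((N:ℝ) + 2*s)) * (∫⁻ y, Q x y) * (B⁻¹ * B) := by
          ring
      _ = B⁻¹ * ENNReal.ofReal (r ^ ((N:ℝ) + 2*s)) * ∫⁻ y, Q x y := by
          rw [ENNReal.inv_mul_cancel hB0 hBT, mul_one]
  -- Step C : Chebyshev and conclusion
  have hS : MeasurableSet {x : sp N | 2 * lam ≤ v x} := measurableSet_le measurable_const hv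
  have hchain : ∀ x ∈ {x : sp N | 2 * lam ≤ v x},
      ENNReal.ofReal lam ^ 2 ≤ B⁻¹ * ENNReal.ofReal (r ^ ((N:ℝ) + 2*s)) * ∫⁻ y, Q x y := by
    intro x hx
    refine le_trans ?_ (stepB x)
    have h1 : ENNReal.ofReal lam ≤ a x - Avg x := by
      have hAvgT : Avg x ≠ ⊤ := ((stepA x).trans_lt ENNReal.ofReal_lt_top).ne
      refine ENNReal.le_sub_of_add_le_left hAvgT ?_
      calc Avg x + ENNReal.ofReal lam ≤ ENNReal.ofReal lam + ENNReal.ofReal lam :=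
            add_le_add_left (stepA x) _
        _ = ENNReal.ofReal (2 * lam) := by
            rw [two_mul, ENNReal.ofReal_add hlam.le hlam.le]
        _ ≤ a x := ENNReal.ofReal_le_ofReal hx
    exact pow_le_pow_left₀ (zero_le) h1 2
  have hmain := mul_meas_le_lintegral hS _ _ hchain
  have hrw : ∫⁻ x, B⁻¹ * ENNReal.ofReal (r ^ ((N:ℝ) + 2*s)) * ∫⁻ y, Q x y =
      B⁻¹ * ENNReal.ofReal (r ^ ((N:ℝ) + 2*s)) * gagliardo N s v :=
    lintegral_const_mul' _ _
      (ENNReal.mul_ne_top (ENNReal.inv_ne_top.mpr hB0) ENNReal.ofReal_ne_top)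
  rw [hrw] at hmain
  calc volume {x : sp N | 2 * lam ≤ v x}
      = (ENNReal.ofReal lam)⁻¹ ^ 2 * (ENNReal.ofReal lam ^ 2 * volume {x : sp N | 2 * lam ≤ v x}) := by
        rw [← mul_assoc, ← mul_pow, ENNReal.inv_mul_cancel hL hLT, one_pow, one_mul]
    _ ≤ (ENNReal.ofReal lam)⁻¹ ^ 2 *
        (B⁻¹ * ENNReal.ofReal (r ^ ((N:ℝ) + 2*s)) * gagliardo N s v) := mul_le_mul_right hmain _
    _ = (ENNReal.ofReal lam)⁻¹ ^ 2 * B⁻¹ * ENNReal.ofReal (r ^ ((N : ℝ) + 2 * s)) *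
        gagliardo N s v := by ring

lemma tsum_tr_sq_le_aux {a b : ℝ} (ha : 0 ≤ a) (hab : a ≤ b) :
    ∑' k : ℤ, ENNReal.ofReal ((tr ((2:ℝ)^k) b - tr ((2:ℝ)^k) a) ^ 2) ≤
      ENNReal.ofReal ((b - a) ^ 2) := by
  have hb : 0 ≤ b := ha.trans hab
  set e : ℤ → ℝ := fun k => min b ((2:ℝ)^k) - min a ((2:ℝ)^k) with hedef
  have hmin : ∀ c d : ℝ, c ≤ d → min b c - min a c ≤ min b d - min a d := by
    intro c d hcd; simp only [min_def]; split_ifs <;> linarith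
  have he0 : ∀ k, 0 ≤ e k := fun k => sub_nonneg.mpr (min_le_min hab le_rfl)
  have hemono : ∀ j k : ℤ, j ≤ k → e j ≤ e k := fun j k hjk =>
    hmin _ _ (zpow_le_zpow_right₀ (by norm_num) hjk)
  have heb : ∀ k, e k ≤ b - a := by
    intro k; simp only [hedef, min_def]; split_ifs <;> linarith
  have hd : ∀ k : ℤ, tr ((2:ℝ)^k) b - tr ((2:ℝ)^k) a = e (k+1) - e k := by
    intro k
    have h2 : ((2:ℝ))^(k+1) = 2 * (2:ℝ)^k := by
      rw [zpow_add_one₀ (by norm_num : (2:ℝ) ≠ 0)]; ring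
    rw [tr_telescope (by positivity) hb, tr_telescope (by positivity) ha, hedef]
    simp only [h2]; ring
  have hdnn : ∀ k : ℤ, 0 ≤ tr ((2:ℝ)^k) b - tr ((2:ℝ)^k) a := by
    intro k; rw [hd k]; exact sub_nonneg.mpr (hemono k (k+1) (by omega))
  have hdle : ∀ k : ℤ, tr ((2:ℝ)^k) b - tr ((2:ℝ)^k) a ≤ b - a := by
    intro k; rw [hd k]; have := heb (k+1); have := he0 k; linarith
  have htel : ∀ m M : ℤ, m ≤ M → ∑ k ∈ Finset.Icc m M, (e (k+1) - e k) = e (M+1) - e m := by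
    intro m M hM
    refine Int.le_induction (motive := fun M _ => ∑ k ∈ Finset.Icc m M, (e (k+1) - e k) = e (M+1) - e m) ?_ ?_ M hM
    · rw [Finset.Icc_self, Finset.sum_singleton]
    · intro n hmn ih
      have hins : Finset.Icc m (n+1) = insert (n+1) (Finset.Icc m n) := by
        ext k; simp only [Finset.mem_Icc, Finset.mem_insert]; omega
      rw [hins, Finset.sum_insert (by simp only [Finset.mem_Icc]; omega), ih]
      ring
  have hFsum : ∀ F : Finset ℤ,
      ∑ k ∈ F, ENNReal.ofReal ((tr ((2:ℝ)^k) b - tr ((2:ℝ)^k) a) ^ 2) ≤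
        ENNReal.ofReal ((b - a) ^ 2) := by
    intro F
    rcases F.eq_empty_or_nonempty with rfl | hF
    · simp
    · set m := F.min' hF
      set M := F.max' hF
      have hsub : F ⊆ Finset.Icc m M := by
        intro k hk; simp only [Finset.mem_Icc]
        exact ⟨F.min'_le k hk, F.le_max' k hk⟩
      have h1 : ∑ k ∈ F, (tr ((2:ℝ)^k) b - tr ((2:ℝ)^k) a) ≤ b - a := by
        calc ∑ k ∈ F, (tr ((2:ℝ)^k) b - tr ((2:ℝ)^k) a)
            ≤ ∑ k ∈ Finset.Icc m M, (tr ((2:ℝ)^k) b - tr ((2:ℝ)^k) a) :=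
              Finset.sum_le_sum_of_subset_of_nonneg hsub (fun k _ _ => hdnn k)
          _ = e (M+1) - e m := by
              rw [← htel m M (F.min'_le _ (F.max'_mem hF))]
              exact Finset.sum_congr rfl fun k _ => hd k
          _ ≤ b - a := by have := heb (M+1); have := he0 m; linarith
      calc ∑ k ∈ F, ENNReal.ofReal ((tr ((2:ℝ)^k) b - tr ((2:ℝ)^k) a) ^ 2)
          = ENNReal.ofReal (∑ k ∈ F, (tr ((2:ℝ)^k) b - tr ((2:ℝ)^k) a) ^ 2) :=
            (ENNReal.ofReal_sum_of_nonneg fun k _ => sq_nonneg _).symm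
        _ ≤ ENNReal.ofReal ((b - a) ^ 2) := by
            refine ENNReal.ofReal_le_ofReal ?_
            calc ∑ k ∈ F, (tr ((2:ℝ)^k) b - tr ((2:ℝ)^k) a) ^ 2
                ≤ ∑ k ∈ F, (b - a) * (tr ((2:ℝ)^k) b - tr ((2:ℝ)^k) a) := by
                  refine Finset.sum_le_sum fun k _ => ?_
                  rw [pow_two]
                  exact mul_le_mul_of_nonneg_right (hdle k) (hdnn k)
              _ = (b - a) * ∑ k ∈ F, (tr ((2:ℝ)^k) b - tr ((2:ℝ)^k) a) := by
                  rw [Finset.mul_sum]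
              _ ≤ (b - a) * (b - a) := by
                  exact mul_le_mul_of_nonneg_left h1 (by linarith)
              _ = (b - a) ^ 2 := (pow_two _).symm
  rw [ENNReal.tsum_eq_iSup_sum]
  exact iSup_le hFsum

lemma tsum_tr_sq_le {a b : ℝ} (ha : 0 ≤ a) (hb : 0 ≤ b) :
    ∑' k : ℤ, ENNReal.ofReal ((tr ((2:ℝ)^k) b - tr ((2:ℝ)^k) a) ^ 2) ≤
      ENNReal.ofReal ((b - a) ^ 2) := by
  rcases le_total a b with h | h
  · exact tsum_tr_sq_le_aux ha h
  · have hsq : ∀ x y : ℝ, (x - y) ^ 2 = (y - x) ^ 2 := fun x y => by ring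
    calc ∑' k : ℤ, ENNReal.ofReal ((tr ((2:ℝ)^k) b - tr ((2:ℝ)^k) a) ^ 2)
        = ∑' k : ℤ, ENNReal.ofReal ((tr ((2:ℝ)^k) a - tr ((2:ℝ)^k) b) ^ 2) := by
          refine tsum_congr fun k => by rw [hsq]
      _ ≤ ENNReal.ofReal ((a - b) ^ 2) := tsum_tr_sq_le_aux hb h
      _ = ENNReal.ofReal ((b - a) ^ 2) := by rw [hsq]

lemma tsum_gag_le {N : ℕ} {s : ℝ} (v : sp N → ℝ) (hv : Measurable v) (h0 : ∀ x, 0 ≤ v x) :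
    ∑' k : ℤ, gagliardo N s (fun x => tr ((2:ℝ)^k) (v x)) ≤ gagliardo N s v := by
  set F : ℤ → sp N → sp N → ℝ≥0∞ := fun k x y =>
    ENNReal.ofReal (|tr ((2:ℝ)^k) (v x) - tr ((2:ℝ)^k) (v y)| ^ 2 /
      ‖x - y‖ ^ ((N:ℝ) + 2 * s)) with hFdef
  have hden : Measurable fun p : sp N × sp N => ‖p.1 - p.2‖ ^ ((N:ℝ) + 2 * s) :=
    ((continuous_fst.sub continuous_snd).norm.measurable).pow_const _
  have hFm : ∀ k, Measurable (Function.uncurry (F k)) := by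
    intro k
    have hvk : Measurable fun t : sp N => tr ((2:ℝ)^k) (v t) :=
      (tr_continuous _).measurable.comp hv
    apply Measurable.ennreal_ofReal
    exact (((hvk.comp measurable_fst).sub (hvk.comp measurable_snd)).abs.pow_const 2).div hden
  have hinner : ∀ k, Measurable fun x => ∫⁻ y, F k x y :=
    fun k => (hFm k).lintegral_prod_right
  have hpt : ∀ x y : sp N, ∑' k : ℤ, F k x y ≤
      ENNReal.ofReal (|v x - v y| ^ 2 / ‖x - y‖ ^ ((N:ℝ) + 2 * s)) := by
    intro x y
    by_cases hxy : ‖x - y‖ ^ ((N:ℝ) + 2 * s) = 0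
    · simp [hFdef, hxy]
    · have hD : 0 < ‖x - y‖ ^ ((N:ℝ) + 2 * s) :=
        lt_of_le_of_ne (Real.rpow_nonneg (norm_nonneg _) _) (Ne.symm hxy)
      have hrw : ∀ d : ℝ, ENNReal.ofReal (|d| ^ 2 / ‖x - y‖ ^ ((N:ℝ) + 2 * s)) =
          ENNReal.ofReal (d ^ 2) * ENNReal.ofReal ((‖x - y‖ ^ ((N:ℝ) + 2 * s))⁻¹) := by
        intro d
        rw [div_eq_mul_inv, ENNReal.ofReal_mul (by positivity), sq_abs]
      calc ∑' k : ℤ, F k x y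
          = (∑' k : ℤ, ENNReal.ofReal ((tr ((2:ℝ)^k) (v x) - tr ((2:ℝ)^k) (v y)) ^ 2)) *
              ENNReal.ofReal ((‖x - y‖ ^ ((N:ℝ) + 2 * s))⁻¹) := by
            rw [← ENNReal.tsum_mul_right]
            exact tsum_congr fun k => hrw _
        _ ≤ ENNReal.ofReal ((v x - v y) ^ 2) *
              ENNReal.ofReal ((‖x - y‖ ^ ((N:ℝ) + 2 * s))⁻¹) :=
            mul_le_mul_left (by simpa using tsum_tr_sq_le (h0 y) (h0 x)) _
        _ = ENNReal.ofReal (|v x - v y| ^ 2 / ‖x - y‖ ^ ((N:ℝ) + 2 * s)) := by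
            rw [hrw]
  calc ∑' k : ℤ, gagliardo N s (fun x => tr ((2:ℝ)^k) (v x))
      = ∫⁻ x, ∑' k : ℤ, ∫⁻ y, F k x y :=
        (lintegral_tsum fun k => (hinner k).aemeasurable).symm
    _ = ∫⁻ x, ∫⁻ y, ∑' k : ℤ, F k x y := by
        refine lintegral_congr fun x => ?_
        exact (lintegral_tsum fun k => ((hFm k).comp (measurable_prodMk_left)).aemeasurable).symm
    _ ≤ gagliardo N s v :=
        lintegral_mono fun x => lintegral_mono fun y => hpt x y

lemma master (N : ℕ) (s : ℝ) (hN : 2 ≤ N) (hs : 0 < s) (hNs : 2 * s < (N : ℝ)) (A : ℝ) :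
    ∃ C : ℝ≥0∞, C ≠ ⊤ ∧ ∀ v : sp N → ℝ, Measurable v → (∀ x, 0 ≤ v x) →
      (∫⁻ x, ENNReal.ofReal (v x ^ 2)) ≠ ⊤ → gagliardo N s v ≤ ENNReal.ofReal A →
      ∫⁻ x, ENNReal.ofReal (v x) ^ (2 * (N : ℝ) / ((N : ℝ) - 2 * s)) ≤ C := by
  have hN0 : (0:ℝ) < N := by
    have : 0 < N := by omega
    exact_mod_cast this
  have hNs0 : (0:ℝ) < (N:ℝ) - 2*s := by linarith
  set θ : ℝ := 2 * s / N with hθdef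
  set qs : ℝ := 2 * (N:ℝ) / ((N:ℝ) - 2 * s) with hqsdef
  have hθ0 : 0 < θ := by rw [hθdef]; positivity
  have hθ1 : θ < 1 := by rw [hθdef]; rw [div_lt_one hN0]; linarith
  have h1θ : 0 < 1 - θ := by linarith
  have hqs0 : 0 < qs := by rw [hqsdef]; positivity
  have hqs2 : qs - 2 = θ * qs := by
    rw [hθdef, hqsdef]; field_simp; ring
  have hqsgt : 2 < qs := by nlinarith
  haveI : Nonempty (Fin N) := ⟨⟨0, by omega⟩⟩
  haveI ntv : Nontrivial (sp N) := by
    refine ⟨⟨EuclideanSpace.single ⟨0, by omega⟩ (1:ℝ), 0, fun h => ?_⟩⟩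
    have := congrArg (fun f : sp N => f ⟨0, by omega⟩) h
    simp [EuclideanSpace.single_apply] at this
  set cN := volume (ball (0 : sp N) 1) with hcNdef
  have hcN0 : cN ≠ 0 := (measure_ball_pos volume _ one_pos).ne'
  have hcNT : cN ≠ ⊤ := measure_ball_lt_top.ne
  have hcNtR : 0 < cN.toReal := ENNReal.toReal_pos hcN0 hcNT
  set K : ℝ≥0∞ := 4 * cN⁻¹ * ENNReal.ofReal ((16 / cN.toReal) ^ θ) with hKdef
  have hK0 : K ≠ 0 := by
    refine mul_ne_zero (mul_ne_zero (by norm_num) ?_) ?_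
    · simp [hcNT]
    · exact (ENNReal.ofReal_pos.mpr (Real.rpow_pos_of_pos (by positivity) _)).ne'
  have hKT : K ≠ ⊤ :=
    ENNReal.mul_ne_top (ENNReal.mul_ne_top (by norm_num) (ENNReal.inv_ne_top.mpr hcN0))
      ENNReal.ofReal_ne_top
  set tq : ℝ≥0∞ := (2:ℝ≥0∞) ^ qs with htqdef
  have htq0 : tq ≠ 0 := (ENNReal.rpow_pos (by norm_num) (by norm_num)).ne'
  have htqT : tq ≠ ⊤ := (ENNReal.rpow_lt_top_of_nonneg hqs0.le (by norm_num)).ne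
  set AA : ℝ≥0∞ := max (ENNReal.ofReal A) 1 with hAAdef
  have hAA0 : AA ≠ 0 := (lt_of_lt_of_le zero_lt_one (le_max_right _ _)).ne'
  have hAAT : AA ≠ ⊤ := (max_lt ENNReal.ofReal_lt_top (by norm_num)).ne
  set K' : ℝ≥0∞ := tq * K with hK'def
  have hKA0 : K' * AA ≠ 0 := mul_ne_zero (mul_ne_zero htq0 hK0) hAA0
  have hKAT : K' * AA ≠ ⊤ := ENNReal.mul_ne_top (ENNReal.mul_ne_top htqT hKT) hAAT
  set Z : ℝ≥0∞ := (K' * AA) ^ ((1-θ)⁻¹) with hZdef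
  have hZ0 : Z ≠ 0 := by
    rw [hZdef]
    exact (ENNReal.rpow_pos (lt_of_le_of_ne (zero_le) (Ne.symm hKA0)) hKAT).ne'
  have hZT : Z ≠ ⊤ := by
    rw [hZdef]
    exact (ENNReal.rpow_lt_top_of_nonneg (by positivity) hKAT).ne
  refine ⟨tq * (K' * Z ^ θ * AA), ?_, ?_⟩
  · exact ENNReal.mul_ne_top htqT (ENNReal.mul_ne_top
      (ENNReal.mul_ne_top (ENNReal.mul_ne_top htqT hKT)
        (ENNReal.rpow_lt_top_of_nonneg hθ0.le hZT).ne) hAAT)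
  intro v hv h0 hE hgagv
  set E := ∫⁻ x, ENNReal.ofReal (v x ^ 2) with hEdef
  set P : ℤ → ℝ≥0∞ := fun k => ENNReal.ofReal ((2:ℝ) ^ k) with hPdef
  have hzp : ∀ k : ℤ, (0:ℝ) < (2:ℝ) ^ k := fun k => zpow_pos (by norm_num) k
  have hP0 : ∀ k, P k ≠ 0 := fun k => (ENNReal.ofReal_pos.mpr (hzp k)).ne'
  have hPT : ∀ k, P k ≠ ⊤ := fun _ => ENNReal.ofReal_ne_top
  have hPsucc : ∀ k : ℤ, P (k+1) = 2 * P k := by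
    intro k
    rw [hPdef]; simp only
    rw [zpow_add_one₀ (by norm_num : (2:ℝ) ≠ 0), mul_comm ((2:ℝ)^k) 2,
      ENNReal.ofReal_mul (by norm_num)]
    norm_num
  set m : ℤ → ℝ≥0∞ := fun k => volume {x | (2:ℝ) ^ k < v x} with hmdef
  have hUm : ∀ k : ℤ, MeasurableSet {x | (2:ℝ) ^ k < v x} := fun k =>
    measurableSet_lt measurable_const hv
  have hcheb : ∀ k, (P k) ^ 2 * m k ≤ E := by
    intro k
    refine mul_meas_le_lintegral (hUm k) _ _ ?_
    intro x hx
    rw [hPdef]; simp only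
    rw [← ENNReal.ofReal_pow (hzp k).le]
    refine ENNReal.ofReal_le_ofReal ?_
    have hxk : (2:ℝ)^k < v x := hx
    nlinarith [hzp k]
  have hmT : ∀ k, m k ≠ ⊤ := by
    intro k hk
    have h1 := hcheb k
    rw [hk, ENNReal.mul_top (pow_ne_zero 2 (hP0 k))] at h1
    exact hE (top_le_iff.mp h1)
  have hmmono : ∀ k, m (k+1) ≤ m k := by
    intro k
    refine measure_mono fun x hx => ?_
    simp only [Set.mem_setOf_eq] at *
    exact lt_of_le_of_lt (zpow_le_zpow_right₀ (by norm_num) (by omega)) hx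
  set w : ℤ → sp N → ℝ := fun k x => tr ((2:ℝ)^k) (v x) with hwdef
  have hwm : ∀ k, Measurable (w k) := fun k => (tr_continuous _).measurable.comp hv
  have hw0 : ∀ k x, 0 ≤ w k x := fun k x => tr_nonneg (hzp k).le _
  have hgagw : ∀ k, gagliardo N s (w k) ≤ gagliardo N s v := fun k =>
    gag_le_of_lip _ (fun a b => tr_lip _ b a) v
  have hAg : ∀ k, gagliardo N s (w k) ≤ AA := fun k =>
    le_trans (hgagw k) (le_trans hgagv (le_max_left _ _))
  -- the recursion
  have hrec : ∀ k : ℤ, m (k+1) ≤ K * gagliardo N s (w k) * ((P k)⁻¹) ^ 2 * (m k) ^ θ := by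
    intro k
    by_cases hm0 : m k = 0
    · have h1 : m (k+1) = 0 := le_antisymm (by rw [← hm0]; exact hmmono k) (zero_le)
      rw [h1]; exact zero_le
    · set X : ℝ := 16 * (m k).toReal / cN.toReal with hXdef
      have hmtR : 0 < (m k).toReal := ENNReal.toReal_pos hm0 (hmT k)
      have hX0 : 0 < X := by rw [hXdef]; positivity
      set r : ℝ := X ^ (1/(N:ℝ)) with hrdef
      have hr : 0 < r := Real.rpow_pos_of_pos hX0 _
      have hrN : r ^ (N:ℝ) = X := by
        rw [hrdef, ← Real.rpow_mul hX0.le, one_div, inv_mul_cancel₀ hN0.ne', Real.rpow_one]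
      have hofX : ENNReal.ofReal X = 16 * m k / cN := by
        rw [hXdef, ENNReal.ofReal_div_of_pos hcNtR, ENNReal.ofReal_mul (by norm_num),
          ENNReal.ofReal_toReal (hmT k), ENNReal.ofReal_toReal hcNT]
        norm_num
      have hBval : volume (ball (0:sp N) r) = 16 * m k := by
        rw [Measure.addHaar_ball volume 0 hr.le]
        have hfr : r ^ Module.finrank ℝ (sp N) = X := by
          rw [finrank_euclideanSpace_fin, ← Real.rpow_natCast r N, hrN]
        rw [hfr, ← hcNdef, hofX, ENNReal.div_mul_cancel hcN0 hcNT]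
      set lam : ℝ := (2:ℝ) ^ (k-1) with hlamdef
      have hlam : 0 < lam := hzp _
      have hlam2 : (2:ℝ) * lam = (2:ℝ) ^ k := by
        rw [hlamdef, zpow_sub_one₀ (by norm_num : (2:ℝ) ≠ 0)]; ring
      have hwsq : ∀ x, ENNReal.ofReal (w k x ^ 2) ≤
          ({x | (2:ℝ)^k < v x}.indicator fun _ => ENNReal.ofReal (((2:ℝ)^k) ^ 2)) x := by
        intro x
        by_cases hx : (2:ℝ)^k < v x
        · have hmem : x ∈ {x : sp N | (2:ℝ)^k < v x} := hx
          rw [Set.indicator_of_mem hmem]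
          refine ENNReal.ofReal_le_ofReal ?_
          have h1 : w k x ≤ (2:ℝ)^k := tr_le _
          have h2 : 0 ≤ w k x := hw0 k x
          nlinarith
        · have hmem : x ∉ {x : sp N | (2:ℝ)^k < v x} := hx
          rw [Set.indicator_of_notMem hmem]
          have hz : w k x = 0 := tr_of_le (hzp k).le (not_lt.mp hx)
          rw [hz]
          simp
      have hcal : ∫⁻ x, ENNReal.ofReal (w k x ^ 2) ≤
          ENNReal.ofReal lam ^ 2 * volume (ball (0:sp N) r) := by
        calc ∫⁻ x, ENNReal.ofReal (w k x ^ 2)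
            ≤ ∫⁻ x, ({x | (2:ℝ)^k < v x}.indicator fun _ =>
                ENNReal.ofReal (((2:ℝ)^k) ^ 2)) x := lintegral_mono hwsq
          _ = ENNReal.ofReal (((2:ℝ)^k) ^ 2) * m k := lintegral_indicator_const (hUm k) _
          _ ≤ ENNReal.ofReal lam ^ 2 * volume (ball (0:sp N) r) := by
              rw [hBval, ← ENNReal.ofReal_pow hlam.le]
              have h4 : ((2:ℝ)^k)^2 ≤ lam^2 * 16 := by nlinarith [hlam2, hlam]
              calc ENNReal.ofReal (((2:ℝ)^k)^2) * m k
                  ≤ ENNReal.ofReal (lam^2 * 16) * m k :=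
                    mul_le_mul_left (ENNReal.ofReal_le_ofReal h4) _
                _ = ENNReal.ofReal (lam^2) * (16 * m k) := by
                    rw [ENNReal.ofReal_mul (by positivity : (0:ℝ) ≤ lam^2),
                      show ENNReal.ofReal (16:ℝ) = 16 by norm_num]
                    ring
      have hcore := core hs (w k) (hwm k) (hw0 k) r lam hr hlam hcal
      have hincl : {x | (2:ℝ)^(k+1) < v x} ⊆ {x | 2 * lam ≤ w k x} := by
        intro x hx
        simp only [Set.mem_setOf_eq] at *
        have h2k : 2 * ((2:ℝ)^k) ≤ v x := by
          have he : (2:ℝ)^(k+1) = (2:ℝ)^k * 2 := zpow_add_one₀ (by norm_num) k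
          have := hx
          rw [he] at this
          linarith
        show 2 * lam ≤ tr ((2:ℝ)^k) (v x)
        rw [tr_of_ge (hzp k).le h2k]
        exact le_of_eq hlam2
      have hm1 : m (k+1) ≤ (ENNReal.ofReal lam)⁻¹ ^ 2 * (volume (ball (0:sp N) r))⁻¹ *
          ENNReal.ofReal (r ^ ((N:ℝ) + 2*s)) * gagliardo N s (w k) :=
        le_trans (measure_mono hincl) hcore
      have hol0 : ENNReal.ofReal lam ≠ 0 := (ENNReal.ofReal_pos.mpr hlam).ne'
      have hlaminv : (ENNReal.ofReal lam)⁻¹ ^ 2 = 4 * ((P k)⁻¹) ^ 2 := by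
        have h1 : P k = ENNReal.ofReal lam * 2 := by
          rw [hPdef]; simp only
          rw [← hlam2, mul_comm (2:ℝ) lam, ENNReal.ofReal_mul hlam.le]
          norm_num
        calc (ENNReal.ofReal lam)⁻¹ ^ 2
            = 4 * (((ENNReal.ofReal lam)⁻¹)^2 * 4⁻¹) := by
              rw [mul_comm (4:ℝ≥0∞) _, mul_assoc,
                ENNReal.inv_mul_cancel (by norm_num) (by norm_num), mul_one]
          _ = 4 * ((P k)⁻¹)^2 := by
              congr 1
              rw [h1, ENNReal.mul_inv (Or.inl hol0) (Or.inr (by norm_num)), mul_pow,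
                show ((2:ℝ≥0∞)⁻¹)^2 = 4⁻¹ by rw [← ENNReal.inv_pow]; norm_num]
      have hr2s : r ^ (2*s) = X ^ θ := by
        rw [hrdef, ← Real.rpow_mul hX0.le]
        congr 1
        rw [hθdef]; field_simp
      have hrsplit : ENNReal.ofReal (r ^ ((N:ℝ) + 2*s)) =
          ENNReal.ofReal X * ENNReal.ofReal (X ^ θ) := by
        rw [Real.rpow_add hr, ENNReal.ofReal_mul (Real.rpow_nonneg hr.le _), hrN, hr2s]
      have hXθ : ENNReal.ofReal (X ^ θ) =
          ENNReal.ofReal ((16 / cN.toReal) ^ θ) * (m k) ^ θ := by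
        have hX' : X = (16 / cN.toReal) * (m k).toReal := by rw [hXdef]; ring
        rw [hX', Real.mul_rpow (by positivity) ENNReal.toReal_nonneg,
          ENNReal.ofReal_mul (by positivity),
          ← ENNReal.ofReal_rpow_of_nonneg ENNReal.toReal_nonneg hθ0.le,
          ENNReal.ofReal_toReal (hmT k)]
      have h16 : (16:ℝ≥0∞) * m k ≠ 0 := mul_ne_zero (by norm_num) hm0
      have h16T : (16:ℝ≥0∞) * m k ≠ ⊤ := ENNReal.mul_ne_top (by norm_num) (hmT k)
      calc m (k+1) ≤ (ENNReal.ofReal lam)⁻¹ ^ 2 * (volume (ball (0:sp N) r))⁻¹ *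
          ENNReal.ofReal (r ^ ((N:ℝ) + 2*s)) * gagliardo N s (w k) := hm1
        _ = (4 * ((P k)⁻¹)^2) * ((16 * m k)⁻¹ *
            ((16 * m k / cN) * (ENNReal.ofReal ((16 / cN.toReal) ^ θ) * (m k) ^ θ))) *
            gagliardo N s (w k) := by
            rw [hlaminv, hBval, hrsplit, hofX, hXθ]
            ring
        _ = (16 * m k * (16 * m k)⁻¹) *
            (4 * ((P k)⁻¹)^2 * cN⁻¹ * (ENNReal.ofReal ((16 / cN.toReal) ^ θ)) * (m k)^θ *
              gagliardo N s (w k)) := by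
            rw [div_eq_mul_inv]
            ring
        _ = K * gagliardo N s (w k) * ((P k)⁻¹)^2 * (m k)^θ := by
            rw [ENNReal.mul_inv_cancel h16 h16T, one_mul, hKdef]
            ring
  -- y sequence and fixed point
  set y : ℤ → ℝ≥0∞ := fun k => (P k) ^ qs * m k with hydef
  have hstep : ∀ k : ℤ, y (k+1) ≤ K' * gagliardo N s (w k) * (y k) ^ θ := by
    intro k
    have h1 : (P (k+1)) ^ qs = tq * (P k) ^ qs := by
      rw [hPsucc k, ENNReal.mul_rpow_of_nonneg _ _ hqs0.le, htqdef]
    have h2 : (P k)^qs * ((P k)⁻¹)^2 = ((P k)^qs)^θ := by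
      have ha : ((P k)⁻¹)^2 = (P k) ^ (-2:ℝ) := by
        rw [show (-2:ℝ) = -((2:ℕ):ℝ) by norm_num, ENNReal.rpow_neg, ENNReal.rpow_natCast,
          ENNReal.inv_pow]
      rw [ha, ← ENNReal.rpow_add _ _ (hP0 k) (hPT k),
        show qs + (-2:ℝ) = θ * qs by linarith [hqs2],
        mul_comm θ qs, ENNReal.rpow_mul]
    calc y (k+1) = (P (k+1))^qs * m (k+1) := rfl
      _ ≤ (P (k+1))^qs * (K * gagliardo N s (w k) * ((P k)⁻¹)^2 * (m k)^θ) :=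
          mul_le_mul_right (hrec k) _
      _ = tq * K * gagliardo N s (w k) * ((P k)^qs * ((P k)⁻¹)^2) * (m k)^θ := by
          rw [h1]; ring
      _ = K' * gagliardo N s (w k) * (((P k)^qs)^θ * (m k)^θ) := by
          rw [h2, hK'def]; ring
      _ = K' * gagliardo N s (w k) * (y k)^θ := by
          rw [hydef]; simp only
          rw [ENNReal.mul_rpow_of_nonneg _ _ hθ0.le]
  have hZfix : K' * AA * Z ^ θ = Z := by
    rw [hZdef]
    calc K' * AA * ((K'*AA)^((1-θ)⁻¹))^θ
        = (K'*AA)^(1:ℝ) * (K'*AA)^((1-θ)⁻¹*θ) := by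
          rw [ENNReal.rpow_one, ← ENNReal.rpow_mul]
      _ = (K'*AA)^(1 + (1-θ)⁻¹*θ) := (ENNReal.rpow_add _ _ hKA0 hKAT).symm
      _ = (K'*AA)^((1-θ)⁻¹) := by
          congr 1
          field_simp
          ring
  have hybound : ∀ k, y k ≤ (P k) ^ (qs-2) * E := by
    intro k
    have h1 : m k ≤ (P k)^(-2:ℝ) * E := by
      calc m k = (P k)^(-2:ℝ) * ((P k)^(2:ℝ) * m k) := by
            rw [← mul_assoc, ← ENNReal.rpow_add _ _ (hP0 k) (hPT k)]
            norm_num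
        _ ≤ (P k)^(-2:ℝ) * E := by
            refine mul_le_mul_right ?_ _
            rw [show ((2:ℝ)) = ((2:ℕ):ℝ) by norm_num, ENNReal.rpow_natCast]
            exact hcheb k
    calc y k ≤ (P k)^qs * ((P k)^(-2:ℝ) * E) := mul_le_mul_right h1 _
      _ = (P k)^(qs-2) * E := by
          rw [← mul_assoc, ← ENNReal.rpow_add _ _ (hP0 k) (hPT k),
            show qs + (-2:ℝ) = qs - 2 by ring]
  obtain ⟨k₀, hk₀⟩ : ∃ k₀ : ℤ, ∀ k ≤ k₀, y k ≤ Z := by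
    by_cases hE0 : E = 0
    · exact ⟨0, fun k _ => le_trans (hybound k) (by rw [hE0, mul_zero]; exact zero_le)⟩
    · have hEt : 0 < E.toReal := ENNReal.toReal_pos hE0 hE
      have hZt : 0 < Z.toReal := ENNReal.toReal_pos hZ0 hZT
      obtain ⟨n, hn⟩ := exists_pow_lt_of_lt_one (div_pos hZt hEt)
        (Real.rpow_lt_one_of_one_lt_of_neg (by norm_num : (1:ℝ) < 2)
          (by linarith : -(qs-2) < 0))
      refine ⟨-(n:ℤ), fun k hk => ?_⟩
      have hPmono : P k ≤ P (-(n:ℤ)) :=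
        ENNReal.ofReal_le_ofReal (zpow_le_zpow_right₀ (by norm_num) hk)
      have h2 : (P k)^(qs-2) ≤ (P (-(n:ℤ)))^(qs-2) :=
        ENNReal.rpow_le_rpow hPmono (by linarith)
      have h3 : (P (-(n:ℤ)))^(qs-2) = ENNReal.ofReal (((2:ℝ)^(-(qs-2)))^n) := by
        rw [hPdef]; simp only
        rw [ENNReal.ofReal_rpow_of_nonneg (hzp _).le (by linarith : (0:ℝ) ≤ qs - 2)]
        congr 1
        rw [← Real.rpow_intCast (2:ℝ) (-(n:ℤ)), ← Real.rpow_mul (by norm_num : (0:ℝ) ≤ 2),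
          ← Real.rpow_natCast ((2:ℝ)^(-(qs-2))) n,
          ← Real.rpow_mul (by norm_num : (0:ℝ) ≤ 2)]
        congr 1
        push_cast
        ring
      calc y k ≤ (P k)^(qs-2) * E := hybound k
        _ ≤ ENNReal.ofReal (((2:ℝ)^(-(qs-2)))^n) * E := mul_le_mul_left (h3 ▸ h2) _
        _ = ENNReal.ofReal (((2:ℝ)^(-(qs-2)))^n * E.toReal) := by
            rw [ENNReal.ofReal_mul (by positivity), ENNReal.ofReal_toReal hE]
        _ ≤ ENNReal.ofReal (Z.toReal) := by
            refine ENNReal.ofReal_le_ofReal ?_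
            calc ((2:ℝ)^(-(qs-2)))^n * E.toReal
                ≤ (Z.toReal/E.toReal) * E.toReal :=
                  mul_le_mul_of_nonneg_right hn.le hEt.le
              _ = Z.toReal := div_mul_cancel₀ _ hEt.ne'
        _ = Z := ENNReal.ofReal_toReal hZT
  have claim1 : ∀ k : ℤ, y k ≤ Z := by
    intro k
    rcases le_total k k₀ with h | h
    · exact hk₀ k h
    · refine Int.le_induction (motive := fun k _ => y k ≤ Z) (hk₀ k₀ le_rfl) ?_ k h
      intro n _ ih
      calc y (n+1) ≤ K' * gagliardo N s (w n) * (y n)^θ := hstep n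
        _ ≤ K' * AA * Z^θ :=
            mul_le_mul' (mul_le_mul_right (hAg n) _) (ENNReal.rpow_le_rpow ih hθ0.le)
        _ = Z := hZfix
  have claim2 : ∑' k : ℤ, y k ≤ K' * Z^θ * AA := by
    have h1 : ∑' k : ℤ, y (k+1) = ∑' k : ℤ, y k := by
      simpa using Equiv.tsum_eq (Equiv.addRight (1:ℤ)) y
    rw [← h1]
    calc ∑' k : ℤ, y (k+1) ≤ ∑' k : ℤ, K' * Z^θ * gagliardo N s (w k) := by
          refine ENNReal.tsum_le_tsum fun k => ?_
          calc y (k+1) ≤ K' * gagliardo N s (w k) * (y k)^θ := hstep k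
            _ ≤ K' * gagliardo N s (w k) * Z^θ :=
                mul_le_mul_right (ENNReal.rpow_le_rpow (claim1 k) hθ0.le) _
            _ = K' * Z^θ * gagliardo N s (w k) := by ring
      _ = K' * Z^θ * ∑' k : ℤ, gagliardo N s (w k) := ENNReal.tsum_mul_left
      _ ≤ K' * Z^θ * gagliardo N s v := mul_le_mul_right (tsum_gag_le v hv h0) _
      _ ≤ K' * Z^θ * AA := mul_le_mul_right (le_trans hgagv (le_max_left _ _)) _
  -- decomposition of the integral
  set D : ℤ → Set (sp N) := fun k =>
    {x | (2:ℝ)^k < v x} \ {x | (2:ℝ)^(k+1) < v x} with hDdef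
  have hDm : ∀ k, MeasurableSet (D k) := fun k => (hUm k).diff (hUm (k+1))
  have hDdisj : Pairwise (Function.onFun Disjoint D) := by
    have key : ∀ j k : ℤ, j < k → Disjoint (D j) (D k) := by
      intro j k hjk
      rw [Set.disjoint_left]
      intro x hxj hxk
      have h1 : ¬ ((2:ℝ)^(j+1) < v x) := hxj.2
      have h2 : (2:ℝ)^k < v x := hxk.1
      exact h1 (lt_of_le_of_lt (zpow_le_zpow_right₀ (by norm_num) (by omega)) h2)
    intro j k hjk
    rcases lt_or_gt_of_ne hjk with h | h
    · exact key j k h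
    · exact (key k j h).symm
  have hcover : {x | 0 < v x} ⊆ ⋃ k : ℤ, D k := by
    intro x hx
    obtain ⟨n, hn⟩ := _root_.exists_mem_Ioc_zpow hx (by norm_num : (1:ℝ) < 2)
    exact Set.mem_iUnion.mpr ⟨n, hn.1, not_lt.mpr hn.2⟩
  set g : sp N → ℝ≥0∞ := fun x => ENNReal.ofReal (v x) ^ qs with hgdef
  have hAm : MeasurableSet (⋃ k : ℤ, D k) := MeasurableSet.iUnion hDm
  have hsplit : ∫⁻ x, g x = ∫⁻ x in (⋃ k : ℤ, D k), g x := by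
    rw [← lintegral_add_compl g hAm]
    have hz : ∫⁻ x in (⋃ k : ℤ, D k)ᶜ, g x = 0 := by
      have hcongr : ∫⁻ x in (⋃ k : ℤ, D k)ᶜ, g x = ∫⁻ _ in (⋃ k : ℤ, D k)ᶜ, (0:ℝ≥0∞) := by
        refine setLIntegral_congr_fun hAm.compl
          (fun x hx => ?_)
        have h0x : ¬ (0 < v x) := fun hpos => hx (hcover hpos)
        have hv0 : v x = 0 := le_antisymm (not_lt.mp h0x) (h0 x)
        rw [hgdef]; simp only
        rw [hv0]
        simp [ENNReal.zero_rpow_of_pos hqs0]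
      rw [hcongr, lintegral_zero]
    rw [hz, add_zero]
  have hDk : ∀ k, ∫⁻ x in D k, g x ≤ tq * y k := by
    intro k
    have hgb : ∀ x ∈ D k, g x ≤ (P (k+1)) ^ qs := by
      intro x hx
      rw [hgdef]; simp only
      refine ENNReal.rpow_le_rpow (ENNReal.ofReal_le_ofReal ?_) hqs0.le
      exact not_lt.mp hx.2
    calc ∫⁻ x in D k, g x ≤ ∫⁻ _ in D k, (P (k+1))^qs := setLIntegral_mono measurable_const hgb
      _ = (P (k+1))^qs * volume (D k) := setLIntegral_const _ _
      _ ≤ (P (k+1))^qs * m k := mul_le_mul_right (measure_mono Set.diff_subset) _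
      _ = tq * y k := by
          rw [hPsucc k, ENNReal.mul_rpow_of_nonneg _ _ hqs0.le, hydef]; simp only
          rw [htqdef, mul_assoc]
  calc ∫⁻ x, ENNReal.ofReal (v x) ^ qs = ∫⁻ x in (⋃ k : ℤ, D k), g x := hsplit
    _ = ∑' k : ℤ, ∫⁻ x in D k, g x := lintegral_iUnion hDm hDdisj g
    _ ≤ ∑' k : ℤ, tq * y k := ENNReal.tsum_le_tsum hDk
    _ = tq * ∑' k : ℤ, y k := ENNReal.tsum_mul_left
    _ ≤ tq * (K' * Z^θ * AA) := mul_le_mul_right claim2 _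


end Apriori

open Apriori in
theorem apriori_bounds (N : ℕ) (hN : 2 ≤ N) (s : ℝ) (hs : 0 < s) (hs1 : s < 1)
    (hNs : 2 * s < (N : ℝ)) (p : ℝ) (hp1 : 1 < p)
    (hp2 : p < ((N : ℝ) + 2 * s) / ((N : ℝ) - 2 * s))
    (u : ℕ → EuclideanSpace ℝ (Fin N) → ℝ)
    (hmem : ∀ n, MemLp (u n) 2 volume)
    (hgag : ∃ A : ℝ, ∀ n, gagliardo N s (u n) ≤ ENNReal.ofReal A)
    (hint : ∀ n, Integrable (fun x => |u n x| ^ (p + 1) / (p + 1) - (u n x) ^ 2 / 2) volume)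
    (hconstraint : ∀ n,
      ∫ x : EuclideanSpace ℝ (Fin N), (|u n x| ^ (p + 1) / (p + 1) - (u n x) ^ 2 / 2) = 1) :
    (∃ C : ℝ, ∀ n, eLpNorm (u n) 2 volume ≤ ENNReal.ofReal C) ∧
    (∀ q : ℝ, 2 ≤ q → q ≤ 2 * (N : ℝ) / ((N : ℝ) - 2 * s) →
      ∃ C : ℝ, ∀ n, eLpNorm (u n) (ENNReal.ofReal q) volume ≤ ENNReal.ofReal C) := by
  obtain ⟨A, hA⟩ := hgag
  obtain ⟨C, hCT, hC⟩ := Apriori.master N s hN hs hNs A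
  have hN0 : (0:ℝ) < N := by
    have : 0 < N := by omega
    exact_mod_cast this
  have hNs0 : (0:ℝ) < (N:ℝ) - 2*s := by linarith
  set qs : ℝ := 2 * (N:ℝ) / ((N:ℝ) - 2 * s) with hqsdef
  have hqs0 : 0 < qs := by rw [hqsdef]; positivity
  have hp1qs : p + 1 < qs := by
    have h1 : ((N:ℝ) + 2*s) / ((N:ℝ) - 2*s) + 1 = qs := by
      rw [hqsdef]; field_simp; ring
    linarith
  have hqs2 : 2 < qs := by linarith
  -- the two-norm facts, uniformly in n
  have hE2eq : ∀ n, ∫⁻ x, (‖u n x‖₊ : ℝ≥0∞) ^ (2:ℝ) =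
      ENNReal.ofReal (∫ x, (u n x)^2) := by
    intro n
    have hu2 : Integrable (fun x => (u n x)^2) volume := (hmem n).integrable_sq
    rw [ofReal_integral_eq_lintegral_ofReal hu2
      (Filter.Eventually.of_forall fun x => sq_nonneg _)]
    refine lintegral_congr fun x => ?_
    rw [← enorm_eq_nnnorm, Real.enorm_eq_ofReal_abs, ofReal_sq (abs_nonneg _), sq_abs]
  have hE2fin : ∀ n, ∫⁻ x, (‖u n x‖₊ : ℝ≥0∞) ^ (2:ℝ) ≠ ⊤ := by
    intro n
    rw [hE2eq n]
    exact ENNReal.ofReal_ne_top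
  have hqs_bound : ∀ n, ∫⁻ x, (‖u n x‖₊ : ℝ≥0∞) ^ qs ≤ C := by
    intro n
    set w : EuclideanSpace ℝ (Fin N) → ℝ := ((hmem n).1).mk (u n) with hwdef
    have hwm : Measurable w := ((hmem n).1.stronglyMeasurable_mk).measurable
    have hae : u n =ᵐ[volume] w := (hmem n).1.ae_eq_mk
    set v : EuclideanSpace ℝ (Fin N) → ℝ := fun x => |w x| with hvdef
    have hvm : Measurable v := hwm.abs
    have hv0 : ∀ x, 0 ≤ v x := fun x => abs_nonneg _
    have hR : ∫⁻ x, ENNReal.ofReal (v x ^ 2) = ∫⁻ x, (‖u n x‖₊ : ℝ≥0∞) ^ (2:ℝ) := by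
      refine lintegral_congr_ae ?_
      filter_upwards [hae] with x hx
      rw [← enorm_eq_nnnorm, Real.enorm_eq_ofReal_abs, ofReal_sq (abs_nonneg _), hvdef]
      simp only
      rw [← hx, sq_abs]
    have hgagv : gagliardo N s v ≤ ENNReal.ofReal A := by
      calc gagliardo N s v ≤ gagliardo N s w :=
            gag_le_of_lip _ (fun a b => abs_abs_sub_abs_le_abs_sub a b) w
        _ = gagliardo N s (u n) := (gag_congr hae).symm
        _ ≤ ENNReal.ofReal A := hA n
    have hmain := hC v hvm hv0 (by rw [hR]; exact hE2fin n) hgagv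
    have hcg : ∫⁻ x, (‖u n x‖₊ : ℝ≥0∞) ^ qs = ∫⁻ x, ENNReal.ofReal (v x) ^ qs := by
      refine lintegral_congr_ae ?_
      filter_upwards [hae] with x hx
      rw [← enorm_eq_nnnorm, Real.enorm_eq_ofReal_abs, hvdef]
      simp only
      rw [hx]
    rw [hcg]
    exact hmain
  -- pointwise interpolation constant
  set t1 : ℝ := min 1 (((p+1)/4) ^ ((p-1)⁻¹)) with ht1def
  have ht10 : 0 < t1 := by
    rw [ht1def]
    exact lt_min one_pos (Real.rpow_pos_of_pos (by linarith) _)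
  have ht1key : t1 ^ (p-1) ≤ (p+1)/4 := by
    calc t1 ^ (p-1) ≤ (((p+1)/4) ^ ((p-1)⁻¹)) ^ (p-1) :=
          Real.rpow_le_rpow ht10.le (min_le_right _ _) (by linarith)
      _ = (p+1)/4 := by
          rw [← Real.rpow_mul (by positivity), inv_mul_cancel₀ (by linarith : p - 1 ≠ 0),
            Real.rpow_one]
  set Cp : ℝ := t1 ^ ((p+1) - qs) / (p+1) with hCpdef
  have hCp0 : 0 ≤ Cp := by
    rw [hCpdef]
    positivity
  have hptw : ∀ t : ℝ, |t| ^ (p+1) / (p+1) ≤ Cp * |t| ^ qs + t^2/4 := by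
    intro t
    rcases eq_or_lt_of_le (abs_nonneg t) with h0 | h0
    · rw [← h0, Real.zero_rpow (by linarith : p + 1 ≠ 0), Real.zero_rpow hqs0.ne']
      have : t = 0 := abs_eq_zero.mp h0.symm
      rw [this]
      norm_num
    · rcases le_or_gt |t| t1 with hcase | hcase
      · have h1 : |t| ^ (p+1) = |t| ^ (2:ℝ) * |t| ^ (p-1) := by
          rw [← Real.rpow_add h0]
          congr 1
          ring
        have h2 : |t| ^ (p-1) ≤ (p+1)/4 :=
          le_trans (Real.rpow_le_rpow (abs_nonneg t) hcase (by linarith)) ht1key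
        have h3 : |t| ^ (2:ℝ) = t^2 := by
          rw [show (2:ℝ) = ((2:ℕ):ℝ) by norm_num, Real.rpow_natCast, sq_abs]
        have h4 : |t| ^ (p+1) ≤ t^2 * ((p+1)/4) := by
          rw [h1, h3]
          exact mul_le_mul_of_nonneg_left h2 (sq_nonneg t)
        have h5 : |t| ^ (p+1) / (p+1) ≤ t^2/4 := by
          rw [div_le_iff₀ (by linarith : (0:ℝ) < p + 1)] at *
          calc |t| ^ (p+1) ≤ t^2 * ((p+1)/4) := h4
            _ = t^2/4 * (p+1) := by ring
        have h6 : 0 ≤ Cp * |t| ^ qs := by positivity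
        linarith
      · have h1 : |t| ^ (p+1) = |t| ^ qs * |t| ^ ((p+1) - qs) := by
          rw [← Real.rpow_add h0]
          ring_nf
        have h2 : |t| ^ ((p+1) - qs) ≤ t1 ^ ((p+1) - qs) := by
          rw [show (p+1) - qs = -(qs - (p+1)) by ring, Real.rpow_neg h0.le,
            Real.rpow_neg ht10.le]
          refine inv_anti₀ (Real.rpow_pos_of_pos ht10 _) ?_
          exact Real.rpow_le_rpow ht10.le hcase.le (by linarith)
        have h4 : |t| ^ (p+1) ≤ |t| ^ qs * t1 ^ ((p+1) - qs) := by
          rw [h1]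
          exact mul_le_mul_of_nonneg_left h2 (Real.rpow_nonneg (abs_nonneg t) _)
        have h5 : |t| ^ (p+1) / (p+1) ≤ Cp * |t| ^ qs := by
          rw [hCpdef, div_le_iff₀ (by linarith : (0:ℝ) < p + 1)]
          calc |t| ^ (p+1) ≤ |t| ^ qs * t1 ^ ((p+1) - qs) := h4
            _ = t1 ^ ((p+1) - qs) / (p+1) * |t| ^ qs * (p+1) := by
                field_simp
        nlinarith [sq_nonneg t]
  -- the L² bound
  set C2 : ℝ := 4 * (Cp * C.toReal) with hC2def
  have hL2 : ∀ n, ∫ x, (u n x)^2 ≤ C2 := by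
    intro n
    have hu2 : Integrable (fun x => (u n x)^2) volume := (hmem n).integrable_sq
    have hg1 : Integrable (fun x => |u n x| ^ (p+1) / (p+1)) volume := by
      have heq : (fun x => |u n x| ^ (p+1) / (p+1)) =
          (fun x => (|u n x| ^ (p+1) / (p+1) - (u n x)^2/2) + (u n x)^2/2) := by
        funext x; ring
      rw [heq]
      exact (hint n).add (hu2.div_const 2)
    -- integrability of |u|^qs
    have hq_ae : (fun x => |u n x| ^ qs) =ᵐ[volume]
        (fun x => |((hmem n).1).mk (u n) x| ^ qs) := by
      filter_upwards [(hmem n).1.ae_eq_mk] with x hx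
      rw [hx]
    have hq_asm : AEStronglyMeasurable (fun x => |u n x| ^ qs) volume := by
      refine AEStronglyMeasurable.congr ?_ hq_ae.symm
      exact ((((hmem n).1.stronglyMeasurable_mk).measurable).abs.pow_const qs).aestronglyMeasurable
    have hq_lint : ∫⁻ x, ENNReal.ofReal (|u n x| ^ qs) ≤ C := by
      refine le_trans (le_of_eq (lintegral_congr fun x => ?_)) (hqs_bound n)
      rw [← enorm_eq_nnnorm, Real.enorm_eq_ofReal_abs, ENNReal.ofReal_rpow_of_nonneg (abs_nonneg _) hqs0.le]
    have hqint : Integrable (fun x => |u n x| ^ qs) volume := by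
      refine ⟨hq_asm, ?_⟩
      rw [hasFiniteIntegral_iff_norm]
      calc ∫⁻ x, ENNReal.ofReal ‖|u n x| ^ qs‖ = ∫⁻ x, ENNReal.ofReal (|u n x| ^ qs) := by
            refine lintegral_congr fun x => ?_
            rw [Real.norm_eq_abs, abs_of_nonneg (Real.rpow_nonneg (abs_nonneg _) _)]
        _ ≤ C := hq_lint
        _ < ⊤ := lt_top_iff_ne_top.mpr hCT
    have hqreal : ∫ x, |u n x| ^ qs ≤ C.toReal := by
      rw [integral_eq_lintegral_of_nonneg_ae
        (Filter.Eventually.of_forall fun x => Real.rpow_nonneg (abs_nonneg _) _) hq_asm]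
      refine ENNReal.toReal_mono hCT hq_lint
    have hsub := integral_sub hg1 (hu2.div_const 2)
    rw [hconstraint n] at hsub
    have hmono : ∫ x, |u n x| ^ (p+1)/(p+1) ≤ ∫ x, (Cp * |u n x| ^ qs + (u n x)^2/4) := by
      refine integral_mono hg1 ((hqint.const_mul Cp).add (hu2.div_const 4)) ?_
      intro x
      exact hptw (u n x)
    rw [integral_add (hqint.const_mul Cp) (hu2.div_const 4), integral_const_mul,
      integral_div, integral_div] at hmono
    rw [integral_div, integral_div] at hsub
    have hI0 : 0 ≤ ∫ x, (u n x)^2 := integral_nonneg fun x => sq_nonneg _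
    have hCp' : Cp * ∫ x, |u n x| ^ qs ≤ Cp * C.toReal :=
      mul_le_mul_of_nonneg_left hqreal hCp0
    rw [hC2def]
    linarith
  refine ⟨?_, ?_⟩
  · -- L² conclusion
    refine ⟨max 1 C2, fun n => ?_⟩
    have h1 : eLpNorm (u n) 2 volume =
        (∫⁻ x, (‖u n x‖₊ : ℝ≥0∞) ^ (2:ℝ)) ^ (1/(2:ℝ)) := by
      rw [eLpNorm_eq_lintegral_rpow_enorm_toReal (by norm_num) (by norm_num)]
      norm_num
      rfl
    rw [h1, hE2eq n]
    have h2 : ENNReal.ofReal (∫ x, (u n x)^2) ≤ ENNReal.ofReal (max 1 C2) :=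
      ENNReal.ofReal_le_ofReal (le_trans (hL2 n) (le_max_right _ _))
    have h3 : (1:ℝ≥0∞) ≤ ENNReal.ofReal (max 1 C2) := by
      rw [ENNReal.one_le_ofReal]
      exact le_max_left _ _
    calc (ENNReal.ofReal (∫ x, (u n x)^2)) ^ (1/(2:ℝ))
        ≤ (ENNReal.ofReal (max 1 C2)) ^ (1/(2:ℝ)) := ENNReal.rpow_le_rpow h2 (by norm_num)
      _ ≤ (ENNReal.ofReal (max 1 C2)) ^ (1:ℝ) :=
          ENNReal.rpow_le_rpow_of_exponent_le h3 (by norm_num)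
      _ = ENNReal.ofReal (max 1 C2) := ENNReal.rpow_one _
  · -- L^q conclusion
    intro q hq2 hqle
    have hq0 : (0:ℝ) < q := by linarith
    set Cq : ℝ≥0∞ := ENNReal.ofReal C2 + C with hCqdef
    have hCqT : Cq ≠ ⊤ := ENNReal.add_ne_top.mpr ⟨ENNReal.ofReal_ne_top, hCT⟩
    refine ⟨Cq.toReal + 1, fun n => ?_⟩
    have hofq0 : ENNReal.ofReal q ≠ 0 := (ENNReal.ofReal_pos.mpr hq0).ne'
    have h1 : eLpNorm (u n) (ENNReal.ofReal q) volume =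
        (∫⁻ x, (‖u n x‖₊ : ℝ≥0∞) ^ q) ^ (1/q) := by
      rw [eLpNorm_eq_lintegral_rpow_enorm_toReal hofq0 ENNReal.ofReal_ne_top,
        ENNReal.toReal_ofReal hq0.le]
      rfl
    have hpt : ∀ x, (‖u n x‖₊ : ℝ≥0∞) ^ q ≤
        (‖u n x‖₊ : ℝ≥0∞) ^ (2:ℝ) + (‖u n x‖₊ : ℝ≥0∞) ^ qs := by
      intro x
      rcases le_total ((‖u n x‖₊ : ℝ≥0∞)) 1 with hx1 | hx1
      · exact le_trans (ENNReal.rpow_le_rpow_of_exponent_ge hx1 hq2) (le_add_right le_rfl)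
      · exact le_trans (ENNReal.rpow_le_rpow_of_exponent_le hx1 hqle) (le_add_left le_rfl)
    have h2 : ∫⁻ x, (‖u n x‖₊ : ℝ≥0∞) ^ q ≤ Cq := by
      calc ∫⁻ x, (‖u n x‖₊ : ℝ≥0∞) ^ q
          ≤ ∫⁻ x, ((‖u n x‖₊ : ℝ≥0∞) ^ (2:ℝ) + (‖u n x‖₊ : ℝ≥0∞) ^ qs) :=
            lintegral_mono hpt
        _ = (∫⁻ x, (‖u n x‖₊ : ℝ≥0∞) ^ (2:ℝ)) + ∫⁻ x, (‖u n x‖₊ : ℝ≥0∞) ^ qs := by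
            refine lintegral_add_left' ?_ _
            exact ((hmem n).1.aemeasurable.enorm).pow_const _
        _ ≤ ENNReal.ofReal C2 + C := by
            refine add_le_add ?_ (hqs_bound n)
            rw [hE2eq n]
            exact ENNReal.ofReal_le_ofReal (hL2 n)
        _ = Cq := rfl
    have h3 : Cq ≤ ENNReal.ofReal (Cq.toReal + 1) := by
      calc Cq = ENNReal.ofReal Cq.toReal := (ENNReal.ofReal_toReal hCqT).symm
        _ ≤ ENNReal.ofReal (Cq.toReal + 1) := ENNReal.ofReal_le_ofReal (by linarith)
    have h4 : (1:ℝ≥0∞) ≤ ENNReal.ofReal (Cq.toReal + 1) := by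
      rw [ENNReal.one_le_ofReal]
      linarith [ENNReal.toReal_nonneg (a := Cq)]
    rw [h1]
    calc (∫⁻ x, (‖u n x‖₊ : ℝ≥0∞) ^ q) ^ (1/q)
        ≤ (ENNReal.ofReal (Cq.toReal + 1)) ^ (1/q) :=
          ENNReal.rpow_le_rpow (le_trans h2 h3) (by positivity)
      _ ≤ (ENNReal.ofReal (Cq.toReal + 1)) ^ (1:ℝ) := by
          refine ENNReal.rpow_le_rpow_of_exponent_le h4 ?_
          rw [div_le_one hq0]
          linarith
      _ = ENNReal.ofReal (Cq.toReal + 1) := ENNReal.rpow_one _
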